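/- Let L be a positive-definite integral unimodular lattice and ν an isometry of L with ν^m = id for some positive integer m. Let π_ν = (1/m) Σ_{k=0}^{m−1} ν^k acting on L ⊗_ℤ ℚ, and let L^ν = {x ∈ L : νx = x}. Then the image π_ν(L) equals the dual lattice of L^ν inside the ν-fixed subspace, i.e., π_ν(L) = {x ∈ L ⊗_ℤ ℚ : νx = x and ⟨x, y⟩ ∈ ℤ for all y ∈ L^ν}. -/

import Mathlib

lemma aux_exists_int_smul_mem {V : Type*} [AddCommGroup V] [Module ℚ V]
    (L : Submodule ℤ V) {v : V} (hv : v ∈ Submodule.span ℚ (L : Set V)) :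
    ∃ n : ℤ, n ≠ 0 ∧ (n : ℚ) • v ∈ L := by
  induction hv using Submodule.span_induction with
  | mem x hx => exact ⟨1, one_ne_zero, by simpa using hx⟩
  | zero => exact ⟨1, one_ne_zero, by simp⟩
  | add x y _ _ hx hy =>
      obtain ⟨a, ha, hax⟩ := hx
      obtain ⟨b, hb, hby⟩ := hy
      refine ⟨a * b, mul_ne_zero ha hb, ?_⟩
      have h1 : ((a * b : ℤ) : ℚ) • (x + y)
          = b • ((a:ℚ) • x) + a • ((b:ℚ) • y) := by
        rw [← Int.cast_smul_eq_zsmul ℚ b, ← Int.cast_smul_eq_zsmul ℚ a, smul_add,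
          smul_smul, smul_smul]
        push_cast
        ring_nf
      rw [h1]
      exact L.add_mem (L.smul_mem b hax) (L.smul_mem a hby)
  | smul q x _ hx =>
      obtain ⟨a, ha, hax⟩ := hx
      by_cases hq : q = 0
      · exact ⟨1, one_ne_zero, by simp [hq]⟩
      · refine ⟨a * q.den, mul_ne_zero ha (by exact_mod_cast q.den_nz), ?_⟩
        have h1 : ((a * (q.den:ℤ) : ℤ) : ℚ) • (q • x) = q.num • ((a:ℚ) • x) := by
          rw [← Int.cast_smul_eq_zsmul ℚ q.num, smul_smul, smul_smul]
          congr 1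
          push_cast
          rw [mul_assoc, mul_comm (q.den:ℚ) q, Rat.mul_den_eq_num]
          ring
        rw [h1]
        exact L.smul_mem _ hax

/-- For a positive-definite integral unimodular lattice `L` (realised as a full ℤ-lattice in a
finite-dimensional rational vector space `V`, unimodularity being self-duality) and an isometry
`ν` of `L` with `ν^m = id`, the image `π_ν(L)` of the projection
`π_ν = (1/m) ∑_{k<m} ν^k` equals the dual lattice of the fixed-point lattice `L^ν`
inside the ν-fixed subspace. -/
theorem projection_image_eq_dual_of_fixed_lattice
    (V : Type*) [AddCommGroup V] [Module ℚ V] [FiniteDimensional ℚ V]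
    (B : V →ₗ[ℚ] V →ₗ[ℚ] ℚ) (hsymm : ∀ x y, B x y = B y x)
    (L : Submodule ℤ V) (hfg : L.FG)
    (hspan : Submodule.span ℚ (L : Set V) = ⊤)
    (hint : ∀ x ∈ L, ∀ y ∈ L, ∃ n : ℤ, B x y = (n : ℚ))
    (hpos : ∀ x ∈ L, x ≠ 0 → 0 < B x x)
    (hself : (L : Set V) = {x | ∀ y ∈ L, ∃ n : ℤ, B x y = (n : ℚ)})
    (ν : V ≃ₗ[ℚ] V) (hiso : ∀ x y, B (ν x) (ν y) = B x y)
    (hνL : ∀ x, x ∈ L ↔ ν x ∈ L)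
    (m : ℕ) (hmpos : 0 < m) (hord : ∀ x, (ν ^ m) x = x) :
    (fun v => (m : ℚ)⁻¹ • ∑ k ∈ Finset.range m, (ν ^ k) v) '' (L : Set V)
      = {x | ν x = x ∧ ∀ y ∈ L, ν y = y → ∃ n : ℤ, B x y = (n : ℚ)} := by
  classical
  have hm : (m : ℚ) ≠ 0 := Nat.cast_ne_zero.mpr hmpos.ne'
  -- iterated isometry
  have hBk : ∀ (k : ℕ) (a b : V), B ((ν ^ k) a) ((ν ^ k) b) = B a b := by
    intro k
    induction k with
    | zero => simp
    | succ k ih =>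
        intro a b
        have h1 : (ν ^ (k+1)) a = (ν ^ k) (ν a) := by rw [pow_succ]; rfl
        have h2 : (ν ^ (k+1)) b = (ν ^ k) (ν b) := by rw [pow_succ]; rfl
        rw [h1, h2, ih, hiso]
  -- powers fix fixed vectors
  have hfixk : ∀ (v : V), ν v = v → ∀ k, (ν ^ k) v = v := by
    intro v hv k
    induction k with
    | zero => simp
    | succ k ih =>
        have h1 : (ν ^ (k+1)) v = (ν ^ k) (ν v) := by rw [pow_succ]; rfl
        rw [h1, hv, ih]
  -- powers preserve L
  have hLk : ∀ (k : ℕ) (z : V), z ∈ L → (ν ^ k) z ∈ L := by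
    intro k
    induction k with
    | zero => simpa using fun z h => h
    | succ k ih =>
        intro z hz
        have h1 : (ν ^ (k+1)) z = (ν ^ k) (ν z) := by rw [pow_succ]; rfl
        rw [h1]
        exact ih _ ((hνL z).mp hz)
  -- shifted sum
  have hshiftsum : ∀ u : V,
      ∑ k ∈ Finset.range m, (ν ^ (k+1)) u = ∑ k ∈ Finset.range m, (ν ^ k) u := by
    intro u
    have h1 := Finset.sum_range_succ (fun k => (ν ^ k) u) m
    have h2 := Finset.sum_range_succ' (fun k => (ν ^ k) u) m
    rw [h1] at h2
    have h3 : (ν ^ m) u = (ν ^ 0) u := by rw [hord]; simp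
    rw [h3] at h2
    simpa using h2.symm
  -- the projection as a linear map
  set πL : V →ₗ[ℚ] V :=
    (m : ℚ)⁻¹ • (∑ k ∈ Finset.range m, ((ν ^ k : V ≃ₗ[ℚ] V) : V →ₗ[ℚ] V)) with hπLdef
  have hπ : ∀ v : V, πL v = (m : ℚ)⁻¹ • ∑ k ∈ Finset.range m, (ν ^ k) v := by
    intro v
    simp [hπLdef, LinearMap.sum_apply]
  have hπfix : ∀ z : V, ν (πL z) = πL z := by
    intro z
    rw [hπ, map_smul, map_sum]
    congr 1
    rw [← hshiftsum z]
    congr 1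
    ext k
    rw [pow_succ']
    rfl
  have hπid : ∀ v : V, ν v = v → πL v = v := by
    intro v hv
    rw [hπ]
    rw [Finset.sum_congr rfl fun k _ => hfixk v hv k]
    rw [Finset.sum_const, Finset.card_range, ← Nat.cast_smul_eq_nsmul ℚ m v,
      smul_smul, inv_mul_cancel₀ hm, one_smul]
  have hπB : ∀ z y : V, ν y = y → B (πL z) y = B z y := by
    intro z y hy
    rw [hπ, map_smul, map_sum, LinearMap.smul_apply, LinearMap.sum_apply]
    have : ∀ k ∈ Finset.range m, B ((ν ^ k) z) y = B z y := by
      intro k _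
      conv_lhs => rw [← hfixk y hy k]
      exact hBk k z y
    rw [Finset.sum_congr rfl this, Finset.sum_const, Finset.card_range]
    simp [smul_eq_mul, hm]
  -- positivity on all of V
  have posV : ∀ v : V, v ≠ 0 → 0 < B v v := by
    intro v hv
    obtain ⟨n, hn, hnL⟩ := aux_exists_int_smul_mem L (by rw [hspan]; trivial)
    have hnq : (n : ℚ) ≠ 0 := Int.cast_ne_zero.mpr hn
    have h1 := hpos _ hnL (smul_ne_zero hnq hv)
    simp only [map_smul, LinearMap.smul_apply, smul_eq_mul] at h1
    have h2 : 0 < (n : ℚ) * (n : ℚ) := mul_self_pos.mpr hnq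
    nlinarith
  -- the fixed sublattice
  set Wf : Submodule ℤ V :=
    LinearMap.ker ((ν.toLinearMap - LinearMap.id).restrictScalars ℤ) with hWfdef
  have hWf : ∀ v : V, v ∈ Wf ↔ ν v = v := by
    intro v
    simp [hWfdef, LinearMap.mem_ker, sub_eq_zero, LinearMap.sub_apply]
  set Lν : Submodule ℤ V := L ⊓ Wf with hLνdef
  have hLν : ∀ v : V, v ∈ Lν ↔ v ∈ L ∧ ν v = v := by
    intro v
    rw [hLνdef, Submodule.mem_inf, hWf]
  -- Lν spans the fixed subspace over ℚ
  have hWspan : ∀ w : V, ν w = w → w ∈ Submodule.span ℚ (Lν : Set V) := by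
    intro w hw
    have h3 : πL w ∈ Submodule.map πL (Submodule.span ℚ (L : Set V)) := by
      rw [hspan]
      exact ⟨w, trivial, rfl⟩
    rw [Submodule.map_span] at h3
    have h4 : Submodule.span ℚ (πL '' (L : Set V)) ≤ Submodule.span ℚ (Lν : Set V) := by
      rw [Submodule.span_le]
      rintro _ ⟨u, hu, rfl⟩
      have hsum : (∑ k ∈ Finset.range m, (ν ^ k) u) ∈ Lν := by
        rw [hLν]
        refine ⟨Submodule.sum_mem L fun k _ => hLk k u hu, ?_⟩
        rw [map_sum, ← hshiftsum u]
        congr 1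
        ext k
        rw [pow_succ']
        rfl
      rw [SetLike.mem_coe, hπ u]
      exact Submodule.smul_mem _ _ (Submodule.subset_span hsum)
    exact (hπid w hw) ▸ h4 h3
  -- module-theoretic setup
  haveI hfin : Module.Finite ℤ ↥L := Module.Finite.iff_fg.mpr hfg
  haveI hnz : NoZeroSMulDivisors ℤ V := by
    constructor
    intro n v h
    rw [← Int.cast_smul_eq_zsmul ℚ] at h
    rcases smul_eq_zero.mp h with h | h
    · exact Or.inl (by exact_mod_cast h)
    · exact Or.inr h
  set N : Submodule ℤ ↥L := Lν.comap L.subtype with hNdef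
  have hNmem : ∀ y : ↥L, y ∈ N ↔ ν (y : V) = (y : V) := by
    intro y
    rw [hNdef, Submodule.mem_comap]
    rw [show L.subtype y = (y : V) from rfl, hLν]
    exact ⟨fun h => h.2, fun h => ⟨y.2, h⟩⟩
  haveI hQnz : NoZeroSMulDivisors ℤ (↥L ⧸ N) := by
    constructor
    intro n q h
    by_cases hn : n = 0
    · exact Or.inl hn
    · right
      obtain ⟨y, rfl⟩ := N.mkQ_surjective q
      have hmem : (n • y : ↥L) ∈ N := by
        rw [← Submodule.Quotient.mk_eq_zero, ← Submodule.mkQ_apply, map_zsmul]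
        exact h
      have h2 := (hNmem _).mp hmem
      have hcoe : ((n • y : ↥L) : V) = (n : ℚ) • (y : V) := by
        rw [Int.cast_smul_eq_zsmul ℚ]
        rfl
      rw [hcoe, map_smul] at h2
      have hy : ν (y : V) = (y : V) :=
        smul_right_injective V (Int.cast_ne_zero.mpr hn) h2
      rw [Submodule.mkQ_apply]
      exact (Submodule.Quotient.mk_eq_zero N).mpr ((hNmem y).mpr hy)
  obtain ⟨s, hs⟩ :=
    Module.projective_lifting_property N.mkQ (LinearMap.id) N.mkQ_surjective
  have hret : ∀ y : ↥L, ((y : V) - ((s (N.mkQ y) : ↥L) : V)) ∈ Lν := by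
    intro y
    have h1 : y - s (N.mkQ y) ∈ N := by
      rw [← Submodule.Quotient.mk_eq_zero, ← Submodule.mkQ_apply, map_sub]
      have h2 : N.mkQ (s (N.mkQ y)) = N.mkQ y := LinearMap.congr_fun hs (N.mkQ y)
      rw [h2, sub_self]
    have := (Submodule.mem_comap.mp h1 : L.subtype (y - s (N.mkQ y)) ∈ Lν)
    simpa using this
  -- a ℚ-basis of V from a ℤ-basis of L
  set b : Module.Basis (Module.Free.ChooseBasisIndex ℤ ↥L) ℤ ↥L :=
    Module.Free.chooseBasis ℤ ↥L with hbdef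
  set bV : Module.Free.ChooseBasisIndex ℤ ↥L → V := fun i => ((b i : ↥L) : V) with hbVdef
  have hind : LinearIndependent ℚ bV := by
    rw [← LinearIndependent.iff_fractionRing (R := ℤ) (K := ℚ)]
    exact b.linearIndependent.map' L.subtype (Submodule.ker_subtype L)
  have hLsub : (L : Set V) ⊆ (Submodule.span ℚ (Set.range bV) : Set V) := by
    intro v hv
    have h1 : (⟨v, hv⟩ : ↥L) ∈ (⊤ : Submodule ℤ ↥L) := trivial
    rw [← b.span_eq] at h1
    have h2 : v ∈ Submodule.map L.subtype (Submodule.span ℤ (Set.range b)) :=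
      ⟨⟨v, hv⟩, h1, rfl⟩
    rw [Submodule.map_span] at h2
    have h3 : L.subtype '' Set.range b = Set.range bV := by
      rw [← Set.range_comp]
      rfl
    rw [h3] at h2
    exact Submodule.span_subset_span ℤ ℚ _ h2
  have hspanbV : ⊤ ≤ Submodule.span ℚ (Set.range bV) := by
    rw [← hspan]
    exact Submodule.span_le.mpr hLsub
  set bQ : Module.Basis (Module.Free.ChooseBasisIndex ℤ ↥L) ℚ V := Module.Basis.mk hind hspanbV with hbQ
  -- nondegeneracy gives surjectivity onto the dual
  have hBinj : Function.Injective (B : V →ₗ[ℚ] Module.Dual ℚ V) := by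
    intro v w h
    by_contra hne
    have hd : v - w ≠ 0 := sub_ne_zero.mpr hne
    have hp := posV _ hd
    have hz0 : B (v - w) (v - w) = 0 := by
      have h' : ∀ u, B v u = B w u := fun u => LinearMap.congr_fun h u
      simp [map_sub, LinearMap.sub_apply, h']
    rw [hz0] at hp
    exact lt_irrefl 0 hp
  have hBsurj : Function.Surjective (B : V →ₗ[ℚ] Module.Dual ℚ V) :=
    (LinearMap.injective_iff_surjective_of_finrank_eq_finrank
      (Subspace.dual_finrank_eq).symm).mp hBinj
  -- now the set equality
  ext x
  simp only [Set.mem_image, Set.mem_setOf_eq, SetLike.mem_coe]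
  constructor
  · rintro ⟨z, hzL, rfl⟩
    have hz' : (m : ℚ)⁻¹ • ∑ k ∈ Finset.range m, (ν ^ k) z = πL z := (hπ z).symm
    rw [hz']
    exact ⟨hπfix z, fun y hy hνy => (hπB z y hνy) ▸ hint z hzL y hy⟩
  · rintro ⟨hx1, hx2⟩
    -- the ℤ-linear functional y ↦ B x (retraction y) on L, extended ℚ-linearly to V
    set g0 : ↥L →ₗ[ℤ] ℚ :=
      ((B x).restrictScalars ℤ).comp
        (L.subtype - L.subtype.comp ((s : (↥L ⧸ N) →ₗ[ℤ] ↥L).comp N.mkQ)) with hg0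
    have hg0val : ∀ y : ↥L, g0 y = B x ((y : V) - ((s (N.mkQ y) : ↥L) : V)) := fun y => rfl
    set gQ : V →ₗ[ℚ] ℚ := bQ.constr ℕ (fun i => g0 (b i)) with hgQ
    have hagree : ∀ y : ↥L, gQ (y : V) = g0 y := by
      have heq : (gQ.restrictScalars ℤ).comp L.subtype = g0 := by
        refine b.ext fun i => ?_
        show gQ (bV i) = g0 (b i)
        rw [hgQ, show bV i = bQ i from (Module.Basis.mk_apply hind hspanbV i).symm,
          Module.Basis.constr_basis]
      intro y
      exact LinearMap.congr_fun heq y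
    obtain ⟨z, hz⟩ := hBsurj gQ
    have hzL : z ∈ L := by
      have hmem : z ∈ (L : Set V) := by
        rw [hself]
        intro y hy
        have h1 : B z y = gQ y := by rw [hz]
        rw [h1, hagree ⟨y, hy⟩, hg0val]
        obtain ⟨hw1, hw2⟩ := (hLν _).mp (hret ⟨y, hy⟩)
        exact hx2 _ hw1 hw2
      exact hmem
    refine ⟨z, hzL, ?_⟩
    show (m : ℚ)⁻¹ • ∑ k ∈ Finset.range m, (ν ^ k) z = x
    rw [← hπ]
    have hd0 : ∀ y ∈ Lν, B (πL z - x) y = 0 := by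
      intro y hy
      obtain ⟨hyL, hyfix⟩ := (hLν y).mp hy
      have e1 : B (πL z) y = B z y := hπB z y hyfix
      have e2 : B z y = gQ y := by rw [hz]
      have e3 : gQ y = g0 ⟨y, hyL⟩ := hagree ⟨y, hyL⟩
      have e4 : g0 ⟨y, hyL⟩ = B x y := by
        rw [hg0val]
        have hN0 : N.mkQ ⟨y, hyL⟩ = 0 := by
          rw [Submodule.mkQ_apply]
          exact (Submodule.Quotient.mk_eq_zero N).mpr
            ((hNmem ⟨y, hyL⟩).mpr hyfix)
        rw [hN0, map_zero]
        simp
      rw [map_sub, LinearMap.sub_apply, e1, e2, e3, e4, sub_self]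
    have hdfix : ν (πL z - x) = πL z - x := by rw [map_sub, hπfix, hx1]
    have hdspan := hWspan _ hdfix
    have hker : Submodule.span ℚ (Lν : Set V) ≤ LinearMap.ker (B (πL z - x)) := by
      rw [Submodule.span_le]
      intro y hy
      exact hd0 y hy
    have hBdd : B (πL z - x) (πL z - x) = 0 := hker hdspan
    have hd0' : πL z - x = 0 := by
      by_contra hne
      have := posV _ hne
      rw [hBdd] at this
      exact lt_irrefl 0 this
    exact sub_eq_zero.mp hd0'
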